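/- Let X, Y, Z denote the 2×2 Pauli matrices and let α, β, γ be real numbers. Then every separable state σ on ℂ² ⊗ ℂ² satisfies |α·Tr((X⊗X)σ) + β·Tr((Y⊗Y)σ) + γ·Tr((Z⊗Z)σ)| ≤ max(|α|, |β|, |γ|). In particular, |Tr((X⊗X)σ)| + |Tr((Y⊗Y)σ)| + |Tr((Z⊗Z)σ)| ≤ 1 for every separable σ. -/
import Mathlib


open Matrix
open Kronecker
open scoped BigOperators ComplexOrder

/-- The Pauli matrix `X`. -/
def PauliX : Matrix (Fin 2) (Fin 2) ℂ := !![0, 1; 1, 0]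

/-- The Pauli matrix `Y`. -/
def PauliY : Matrix (Fin 2) (Fin 2) ℂ := !![0, -Complex.I; Complex.I, 0]

/-- The Pauli matrix `Z`. -/
def PauliZ : Matrix (Fin 2) (Fin 2) ℂ := !![1, 0; 0, -1]

/-- A density matrix: Hermitian, positive semidefinite, trace one. -/
def IsDensityMatrix {n : Type*} [Fintype n] (ρ : Matrix n n ℂ) : Prop :=
  ρ.IsHermitian ∧ ρ.PosSemidef ∧ ρ.trace = 1

/-- A separable state on `ℂ² ⊗ ℂ²`: a finite convex combination of Kronecker
products of 2×2 density matrices. -/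
def IsSeparableState (σ : Matrix (Fin 2 × Fin 2) (Fin 2 × Fin 2) ℂ) : Prop :=
  ∃ (m : ℕ) (p : Fin m → ℝ) (ρA ρB : Fin m → Matrix (Fin 2) (Fin 2) ℂ),
    (∀ k, 0 ≤ p k) ∧ (∑ k, p k = 1) ∧
    (∀ k, IsDensityMatrix (ρA k)) ∧ (∀ k, IsDensityMatrix (ρB k)) ∧
    σ = ∑ k, (p k : ℂ) • (ρA k ⊗ₖ ρB k)

lemma bloch {ρ : Matrix (Fin 2) (Fin 2) ℂ} (h : IsDensityMatrix ρ) :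
    ∃ x y z : ℝ, (PauliX * ρ).trace = (x : ℂ) ∧ (PauliY * ρ).trace = (y : ℂ) ∧
      (PauliZ * ρ).trace = (z : ℂ) ∧ x^2 + y^2 + z^2 ≤ 1 := by
  obtain ⟨hH, hP, hT⟩ := h
  have hc : ρ 1 0 = starRingEnd ℂ (ρ 0 1) := by
    have := hH.apply 1 0
    simpa [eq_comm] using this.symm
  have ha : (ρ 0 0).im = 0 := by
    have := hH.apply 0 0
    simp [Complex.ext_iff] at this
    linarith [this]
  have hb : (ρ 1 1).im = 0 := by
    have := hH.apply 1 1
    simp [Complex.ext_iff] at this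
    linarith [this]
  have htr : (ρ 0 0).re + (ρ 1 1).re = 1 := by
    have : ρ 0 0 + ρ 1 1 = 1 := by
      simpa [Matrix.trace, Fin.sum_univ_two] using hT
    have := congrArg Complex.re this
    simpa using this
  -- determinant nonneg
  have hdet : ∃ d : ℝ, 0 ≤ d ∧ ρ.det = (d : ℂ) := by
    refine ⟨∏ i, hH.eigenvalues i, Finset.prod_nonneg fun i _ => hP.eigenvalues_nonneg i, ?_⟩
    rw [hH.det_eq_prod_eigenvalues]; norm_cast
  obtain ⟨d, hd0, hd⟩ := hdet
  have hdet2 : (ρ 0 0).re * (ρ 1 1).re - ((ρ 0 1).re ^ 2 + (ρ 0 1).im ^ 2) = d := by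
    have := hd
    rw [Matrix.det_fin_two, hc] at this
    have := congrArg Complex.re this
    simp [Complex.ext_iff, Complex.mul_re, ha, hb] at this ⊢
    nlinarith [this]
  refine ⟨2 * (ρ 0 1).re, -2 * (ρ 0 1).im, (ρ 0 0).re - (ρ 1 1).re, ?_, ?_, ?_, ?_⟩
  · have : (PauliX * ρ).trace = ρ 1 0 + ρ 0 1 := by
      simp [PauliX, Matrix.trace, Fin.sum_univ_two, Matrix.mul_apply, Matrix.vecMul, dotProduct]
    rw [this, hc]
    simp [Complex.ext_iff]
    ring
  · have : (PauliY * ρ).trace = -Complex.I * ρ 1 0 + Complex.I * ρ 0 1 := by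
      simp [PauliY, Matrix.trace, Fin.sum_univ_two, Matrix.mul_apply, Matrix.vecMul, dotProduct]
    rw [this, hc]
    simp [Complex.ext_iff, Complex.mul_re, Complex.mul_im]
    ring
  · have : (PauliZ * ρ).trace = ρ 0 0 - ρ 1 1 := by
      simp [PauliZ, Matrix.trace, Fin.sum_univ_two, Matrix.mul_apply, Matrix.vecMul, dotProduct]
      ring
    rw [this]
    simp [Complex.ext_iff, ha, hb]
  · nlinarith [hd0, hdet2, htr]

lemma key (m : ℕ) (p xA yA zA xB yB zB : Fin m → ℝ)
    (hp : ∀ k, 0 ≤ p k) (hs : ∑ k, p k = 1)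
    (hA : ∀ k, xA k ^ 2 + yA k ^ 2 + zA k ^ 2 ≤ 1)
    (hB : ∀ k, xB k ^ 2 + yB k ^ 2 + zB k ^ 2 ≤ 1) (α β γ : ℝ) :
    |∑ k, p k * (α * (xA k * xB k) + β * (yA k * yB k) + γ * (zA k * zB k))|
        ≤ max (max |α| |β|) |γ| ∧
    |∑ k, p k * (xA k * xB k)| + |∑ k, p k * (yA k * yB k)|
        + |∑ k, p k * (zA k * zB k)| ≤ 1 := by
  set M := max (max |α| |β|) |γ| with hM
  have hMα : |α| ≤ M := le_max_of_le_left (le_max_left _ _)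
  have hMβ : |β| ≤ M := le_max_of_le_left (le_max_right _ _)
  have hMγ : |γ| ≤ M := le_max_right _ _
  have hS : ∀ k, |xA k * xB k| + |yA k * yB k| + |zA k * zB k| ≤ 1 := by
    intro k
    have h1 : |xA k * xB k| ≤ (xA k ^ 2 + xB k ^ 2) / 2 := by
      rw [abs_mul]
      nlinarith [sq_nonneg (|xA k| - |xB k|), sq_abs (xA k), sq_abs (xB k)]
    have h2 : |yA k * yB k| ≤ (yA k ^ 2 + yB k ^ 2) / 2 := by
      rw [abs_mul]
      nlinarith [sq_nonneg (|yA k| - |yB k|), sq_abs (yA k), sq_abs (yB k)]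
    have h3 : |zA k * zB k| ≤ (zA k ^ 2 + zB k ^ 2) / 2 := by
      rw [abs_mul]
      nlinarith [sq_nonneg (|zA k| - |zB k|), sq_abs (zA k), sq_abs (zB k)]
    have := hA k; have := hB k
    linarith
  constructor
  · calc |∑ k, p k * (α * (xA k * xB k) + β * (yA k * yB k) + γ * (zA k * zB k))|
        ≤ ∑ k, |p k * (α * (xA k * xB k) + β * (yA k * yB k) + γ * (zA k * zB k))| :=
          Finset.abs_sum_le_sum_abs _ _
      _ ≤ ∑ k, p k * M := by
          apply Finset.sum_le_sum
          intro k _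
          rw [abs_mul, abs_of_nonneg (hp k)]
          apply mul_le_mul_of_nonneg_left _ (hp k)
          calc |α * (xA k * xB k) + β * (yA k * yB k) + γ * (zA k * zB k)|
              ≤ |α| * |xA k * xB k| + |β| * |yA k * yB k| + |γ| * |zA k * zB k| := by
                calc _ ≤ |α * (xA k * xB k) + β * (yA k * yB k)| + |γ * (zA k * zB k)| :=
                    abs_add_le _ _
                  _ ≤ |α * (xA k * xB k)| + |β * (yA k * yB k)| + |γ * (zA k * zB k)| := by
                    gcongr; exact abs_add_le _ _
                  _ = _ := by simp [abs_mul]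
            _ ≤ M * |xA k * xB k| + M * |yA k * yB k| + M * |zA k * zB k| := by
                gcongr <;> positivity
            _ = M * (|xA k * xB k| + |yA k * yB k| + |zA k * zB k|) := by ring
            _ ≤ M * 1 := by
                apply mul_le_mul_of_nonneg_left (hS k)
                exact le_trans (abs_nonneg γ) hMγ
            _ = M := mul_one M
      _ = M := by rw [← Finset.sum_mul, hs, one_mul]
  · have habs : ∀ (f : Fin m → ℝ), |∑ k, p k * f k| ≤ ∑ k, p k * |f k| := by
      intro f
      calc |∑ k, p k * f k| ≤ ∑ k, |p k * f k| := Finset.abs_sum_le_sum_abs _ _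
        _ = ∑ k, p k * |f k| := by
            apply Finset.sum_congr rfl; intro k _
            rw [abs_mul, abs_of_nonneg (hp k)]
    calc |∑ k, p k * (xA k * xB k)| + |∑ k, p k * (yA k * yB k)|
          + |∑ k, p k * (zA k * zB k)|
        ≤ ∑ k, p k * |xA k * xB k| + (∑ k, p k * |yA k * yB k|)
          + ∑ k, p k * |zA k * zB k| := by
          have := habs (fun k => xA k * xB k); have := habs (fun k => yA k * yB k)
          have := habs (fun k => zA k * zB k); linarith
      _ = ∑ k, p k * (|xA k * xB k| + |yA k * yB k| + |zA k * zB k|) := by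
          rw [← Finset.sum_add_distrib, ← Finset.sum_add_distrib]
          apply Finset.sum_congr rfl; intro k _; ring
      _ ≤ ∑ k, p k * 1 := by
          apply Finset.sum_le_sum; intro k _
          exact mul_le_mul_of_nonneg_left (hS k) (hp k)
      _ = 1 := by simp [hs]

/-- For real `α, β, γ`, every separable two-qubit state `σ` satisfies
`|α⟨X⊗X⟩_σ + β⟨Y⊗Y⟩_σ + γ⟨Z⊗Z⟩_σ| ≤ max(|α|,|β|,|γ|)`; in particular
`|⟨X⊗X⟩_σ| + |⟨Y⊗Y⟩_σ| + |⟨Z⊗Z⟩_σ| ≤ 1`. -/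
theorem stmt7 (α β γ : ℝ)
    (σ : Matrix (Fin 2 × Fin 2) (Fin 2 × Fin 2) ℂ) (hσ : IsSeparableState σ) :
    ‖(α : ℂ) * ((PauliX ⊗ₖ PauliX) * σ).trace
        + (β : ℂ) * ((PauliY ⊗ₖ PauliY) * σ).trace
        + (γ : ℂ) * ((PauliZ ⊗ₖ PauliZ) * σ).trace‖ ≤ max (max |α| |β|) |γ| ∧
    ‖((PauliX ⊗ₖ PauliX) * σ).trace‖ + ‖((PauliY ⊗ₖ PauliY) * σ).trace‖
        + ‖((PauliZ ⊗ₖ PauliZ) * σ).trace‖ ≤ 1 := by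
  obtain ⟨m, p, ρA, ρB, hp, hs, hDA, hDB, rfl⟩ := hσ
  choose xA yA zA hxA hyA hzA hnA using fun k => bloch (hDA k)
  choose xB yB zB hxB hyB hzB hnB using fun k => bloch (hDB k)
  obtain ⟨k1, k2⟩ := key m p xA yA zA xB yB zB hp hs hnA hnB α β γ
  have htr : ∀ (M N : Matrix (Fin 2) (Fin 2) ℂ),
      ((M ⊗ₖ N) * ∑ k, (p k : ℂ) • (ρA k ⊗ₖ ρB k)).trace
        = ∑ k, (p k : ℂ) * ((M * ρA k).trace * (N * ρB k).trace) := by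
    intro M N
    rw [Matrix.mul_sum, Matrix.trace_sum]
    apply Finset.sum_congr rfl
    intro k _
    rw [mul_smul_comm, Matrix.trace_smul, ← Matrix.mul_kronecker_mul,
      Matrix.trace_kronecker, smul_eq_mul]
  have hX : ((PauliX ⊗ₖ PauliX) * ∑ k, (p k : ℂ) • (ρA k ⊗ₖ ρB k)).trace
      = ((∑ k, p k * (xA k * xB k) : ℝ) : ℂ) := by
    rw [htr]; push_cast
    exact Finset.sum_congr rfl fun k _ => by rw [hxA, hxB]
  have hY : ((PauliY ⊗ₖ PauliY) * ∑ k, (p k : ℂ) • (ρA k ⊗ₖ ρB k)).trace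
      = ((∑ k, p k * (yA k * yB k) : ℝ) : ℂ) := by
    rw [htr]; push_cast
    exact Finset.sum_congr rfl fun k _ => by rw [hyA, hyB]
  have hZ : ((PauliZ ⊗ₖ PauliZ) * ∑ k, (p k : ℂ) • (ρA k ⊗ₖ ρB k)).trace
      = ((∑ k, p k * (zA k * zB k) : ℝ) : ℂ) := by
    rw [htr]; push_cast
    exact Finset.sum_congr rfl fun k _ => by rw [hzA, hzB]
  rw [hX, hY, hZ]
  constructor
  · have : (α : ℂ) * ((∑ k, p k * (xA k * xB k) : ℝ) : ℂ)
        + (β : ℂ) * ((∑ k, p k * (yA k * yB k) : ℝ) : ℂ)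
        + (γ : ℂ) * ((∑ k, p k * (zA k * zB k) : ℝ) : ℂ)
        = ((∑ k, p k * (α * (xA k * xB k) + β * (yA k * yB k) + γ * (zA k * zB k)) : ℝ) : ℂ) := by
      push_cast
      rw [Finset.mul_sum, Finset.mul_sum, Finset.mul_sum, ← Finset.sum_add_distrib,
        ← Finset.sum_add_distrib]
      exact Finset.sum_congr rfl fun k _ => by ring
    rw [this, Complex.norm_real, Real.norm_eq_abs]
    exact k1
  · rw [Complex.norm_real, Complex.norm_real, Complex.norm_real,
      Real.norm_eq_abs, Real.norm_eq_abs, Real.norm_eq_abs]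
    exact k2
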